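/- The point P = (−3, 9) lies on the elliptic curve E₆ : y² = x³ − 36x over ℚ and has infinite order in the group E₆(ℚ) of rational points; that is, n·P ≠ O for every positive integer n, where O is the identity (point at infinity). -/

import Mathlib

/-- The elliptic curve `E₆ : y² = x³ − 36x` over `ℚ`. -/
def E6 : WeierstrassCurve ℚ := ⟨0, 0, 0, -36, 0⟩

namespace E6Aux

open WeierstrassCurve WeierstrassCurve.Affine WeierstrassCurve.Affine.Point

@[simp] lemma a1 : E6.toAffine.a₁ = 0 := rfl
@[simp] lemma a2 : E6.toAffine.a₂ = 0 := rfl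
@[simp] lemma a3 : E6.toAffine.a₃ = 0 := rfl
@[simp] lemma a4 : E6.toAffine.a₄ = -36 := rfl
@[simp] lemma a6 : E6.toAffine.a₆ = 0 := rfl

/-- `x` can be written as `m / (4^k * q)` with `m`, `q` odd integers. -/
def Good (k : ℕ) (x : ℚ) : Prop :=
  ∃ m q : ℤ, Odd m ∧ Odd q ∧ x = (m : ℚ) / (4 ^ k * (q : ℚ))

lemma odd_int_ne_zero {m : ℤ} (h : Odd m) : (m : ℚ) ≠ 0 := by
  have : m ≠ 0 := by rintro rfl; exact (Int.not_odd_iff_even.mpr Even.zero) h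
  exact_mod_cast this

lemma good_ne {k l : ℕ} (hkl : k < l) {x : ℚ} (h1 : Good k x) (h2 : Good l x) : False := by
  obtain ⟨m, q, hm, hq, hx1⟩ := h1
  obtain ⟨m', q', hm', hq', hx2⟩ := h2
  have hq0 : (q : ℚ) ≠ 0 := odd_int_ne_zero hq
  have hq0' : (q' : ℚ) ≠ 0 := odd_int_ne_zero hq'
  have h4 : (4 : ℚ) ^ k ≠ 0 := by positivity
  have h4' : (4 : ℚ) ^ l ≠ 0 := by positivity
  -- cross-multiplied equality over ℚ
  have key : (m : ℚ) * (4 ^ l * q') = (m' : ℚ) * (4 ^ k * q) := by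
    rw [hx1] at hx2
    field_simp at hx2
    linarith [hx2]
  have keyZ : m * (4 ^ l * q') = m' * (4 ^ k * q) := by exact_mod_cast key
  -- write 4^l = 4^k * 4^(l-k)
  have hlk : l = k + (l - k) := by omega
  rw [hlk, pow_add] at keyZ
  have hpos : 1 ≤ l - k := by omega
  have hcancel : m * (4 ^ (l - k) * q') = m' * q := by
    have h4k : (4 : ℤ) ^ k ≠ 0 := by positivity
    apply mul_left_cancel₀ h4k
    linarith [keyZ]
  -- LHS is even, RHS is odd
  have heven : Even (m * (4 ^ (l - k) * q')) := by
    have : Even ((4 : ℤ) ^ (l - k)) := by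
      obtain ⟨j, hj⟩ := Nat.exists_eq_add_of_le hpos
      rw [hj, pow_add, pow_one]
      exact (even_iff_exists_two_mul.mpr ⟨2, by norm_num⟩).mul_right _
    exact ((this.mul_right q').mul_left m)
  have hodd : Odd (m' * q) := hm'.mul hq
  rw [hcancel] at heven
  exact (Int.not_odd_iff_even.mpr heven) hodd

lemma hP : E6.toAffine.Nonsingular (-3) 9 := by
  rw [nonsingular_iff, equation_iff]
  norm_num

/-- Doubling step: doubling a point with `Good k` x-coordinate yields a point
with `Good (k+1)` x-coordinate. -/
lemma good_step {x y : ℚ} (h : E6.toAffine.Nonsingular x y) {k : ℕ} (hg : Good k x) :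
    ∃ (x' y' : ℚ) (h' : E6.toAffine.Nonsingular x' y'),
      Point.some _ _ h + Point.some _ _ h = Point.some _ _ h' ∧ Good (k + 1) x' := by
  obtain ⟨m, q, hm, hq, hx⟩ := hg
  have hq0 : (q : ℚ) ≠ 0 := odd_int_ne_zero hq
  have hm0 : (m : ℚ) ≠ 0 := odd_int_ne_zero hm
  have h4 : (4 : ℚ) ^ k ≠ 0 := by positivity
  have heq : y ^ 2 = x ^ 3 - 36 * x := by
    have := (equation_iff _ _).mp h.1
    simp only [a1, a2, a3, a4, a6] at this
    linarith [this]
  -- the integer M = m² − 36·(4^k)²·q² is odd, N = m² + 36·(4^k)²·q² is odd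
  have hMe : Even (36 * (4 ^ k : ℤ) ^ 2 * q ^ 2) := by
    have : Even (36 : ℤ) := by decide
    exact (this.mul_right _).mul_right _
  have hM : Odd (m ^ 2 - 36 * (4 ^ k : ℤ) ^ 2 * q ^ 2) := (hm.pow).sub_even hMe
  have hN : Odd (m ^ 2 + 36 * (4 ^ k : ℤ) ^ 2 * q ^ 2) := (hm.pow).add_even hMe
  have hMQ : ((m ^ 2 - 36 * (4 ^ k : ℤ) ^ 2 * q ^ 2 : ℤ) : ℚ) ≠ 0 := odd_int_ne_zero hM
  -- x ≠ 0 and x² ≠ 36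
  have hx0 : x ≠ 0 := by
    rw [hx]; exact div_ne_zero hm0 (mul_ne_zero h4 hq0)
  have hx2 : x ^ 2 - 36 ≠ 0 := by
    intro hcon
    apply hMQ
    push_cast
    have : ((m : ℚ) ^ 2 - 36 * ((4 : ℚ) ^ k) ^ 2 * q ^ 2) = (x ^ 2 - 36) * ((4 : ℚ) ^ k * q) ^ 2 := by
      rw [hx]; field_simp
    rw [this, hcon, zero_mul]
  have hden : x ^ 3 - 36 * x ≠ 0 := by
    have : x ^ 3 - 36 * x = x * (x ^ 2 - 36) := by ring
    rw [this]; exact mul_ne_zero hx0 hx2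
  have hy0 : y ≠ 0 := by
    intro h0
    rw [h0] at heq
    exact hden (by linarith [heq])
  have hnegY : E6.toAffine.negY x y = -y := by
    simp [WeierstrassCurve.Affine.negY]
  have hxy : y ≠ E6.toAffine.negY x y := by
    rw [hnegY]
    intro hc
    apply hy0
    linarith [hc]
  refine ⟨_, _, nonsingular_add h h (fun hc => hxy hc.2),
    WeierstrassCurve.Affine.Point.add_some (fun hc => hxy hc.2), ?_⟩
  -- the new x-coordinate
  have hslope : E6.toAffine.slope x x y y = (3 * x ^ 2 - 36) / (2 * y) := by
    rw [slope_of_Y_ne rfl hxy, hnegY]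
    simp only [a1, a2, a4]
    ring_nf
  have hy2 : (2 * y) ≠ 0 := by intro hc; apply hy0; linarith
  have haddX : E6.toAffine.addX x x (E6.toAffine.slope x x y y)
      = (x ^ 2 + 36) ^ 2 / (4 * (x ^ 3 - 36 * x)) := by
    rw [hslope]
    simp only [WeierstrassCurve.Affine.addX, a1, a2]
    rw [div_pow, ← heq]
    field_simp
    linear_combination (-32 : ℚ) * x * heq
  refine ⟨(m ^ 2 + 36 * (4 ^ k : ℤ) ^ 2 * q ^ 2) ^ 2,
    q * m * (m ^ 2 - 36 * (4 ^ k : ℤ) ^ 2 * q ^ 2), hN.pow, (hq.mul hm).mul hM, ?_⟩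
  rw [haddX, hx]
  have h4' : ((4 : ℚ)) ^ (k + 1) = 4 * 4 ^ k := by rw [pow_succ]; ring
  push_cast
  rw [h4']
  have hMQ' : ((m : ℚ) ^ 2 - 36 * ((4 : ℚ) ^ k) ^ 2 * (q : ℚ) ^ 2) ≠ 0 := by
    exact_mod_cast hMQ
  rw [div_eq_div_iff]
  · field_simp
  · -- 4 * (x³ − 36x) ≠ 0 with x substituted
    have : ((m : ℚ) / (4 ^ k * q)) ^ 3 - 36 * ((m : ℚ) / (4 ^ k * q)) ≠ 0 := by
      rw [← hx]; exact hden
    exact mul_ne_zero (by norm_num) this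
  · exact mul_ne_zero (mul_ne_zero (by norm_num) h4)
      (mul_ne_zero (mul_ne_zero hq0 hm0) hMQ')

/-- The sequence of points `2^k • P`. -/
lemma iterate (k : ℕ) : ∃ (x y : ℚ) (h : E6.toAffine.Nonsingular x y),
    (2 ^ k) • (Point.some _ _ hP) = Point.some _ _ h ∧ Good k x := by
  induction k with
  | zero =>
    refine ⟨-3, 9, hP, by rw [pow_zero, one_smul], -3, 1, ⟨-2, by ring⟩, odd_one, by norm_num⟩
  | succ k ih =>
    obtain ⟨x, y, h, hPk, hg⟩ := ih
    obtain ⟨x', y', h', hadd, hg'⟩ := good_step h hg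
    refine ⟨x', y', h', ?_, hg'⟩
    rw [pow_succ, mul_comm, mul_smul, hPk, two_nsmul, hadd]

end E6Aux

/-- The point `P = (−3, 9)` lies on `E₆ : y² = x³ − 36x` and has infinite order
in the Mordell–Weil group `E₆(ℚ)`: `n • P ≠ O` for every positive integer `n`. -/
theorem point_neg_three_nine_infinite_order :
    ∃ h : E6.toAffine.Nonsingular (-3) 9,
      ∀ n : ℕ, 0 < n → n • (WeierstrassCurve.Affine.Point.some _ _ h) ≠ 0 := by
  refine ⟨E6Aux.hP, fun n hn h0 => ?_⟩
  haveI : NeZero n := ⟨hn.ne'⟩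
  -- pigeonhole: k ↦ (2^k : ZMod n) is not injective
  obtain ⟨k, l, hkl, hfeq⟩ := Finite.exists_ne_map_eq_of_infinite
    (fun k : ℕ => ((2 ^ k : ℕ) : ZMod n))
  -- WLOG k < l
  wlog hlt : k < l generalizing k l
  · exact this l k hkl.symm hfeq.symm (by omega)
  -- from 2^k ≡ 2^l [MOD n], get 2^l • P = 2^k • P
  have hmod : (2 ^ k : ℕ) ≡ 2 ^ l [MOD n] := (ZMod.natCast_eq_natCast_iff _ _ _).mp hfeq
  have hle : (2 : ℕ) ^ k ≤ 2 ^ l := Nat.pow_le_pow_right (by norm_num) hlt.le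
  obtain ⟨c, hc⟩ := (Nat.modEq_iff_dvd' hle).mp hmod
  have hsmul : (2 ^ l : ℕ) • (WeierstrassCurve.Affine.Point.some _ _ E6Aux.hP)
      = (2 ^ k : ℕ) • (WeierstrassCurve.Affine.Point.some _ _ E6Aux.hP) := by
    have h2l : (2 : ℕ) ^ l = 2 ^ k + c * n := by rw [mul_comm]; omega
    rw [h2l, add_smul, mul_smul, h0, nsmul_zero, add_zero]
  obtain ⟨xk, yk, hk, hPk, hgk⟩ := E6Aux.iterate k
  obtain ⟨xl, yl, hl, hPl, hgl⟩ := E6Aux.iterate l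
  rw [hPk, hPl] at hsmul
  have hxx : xl = xk := by
    injection hsmul
  exact E6Aux.good_ne hlt hgk (hxx ▸ hgl)
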